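/- Let (C,d) be a complete metric space, α ∈ [0,1), and T₁, T₂ : C → C satisfy d(T₁x, T₂y) ≤ α · max{d(x,y), d(x,T₁x), d(y,T₂y)} for all x,y ∈ C. Then T₁ and T₂ have a unique common fixed point. -/

import Mathlib

open Filter Topology

private lemma stmt9_aux {α u v : ℝ} (hα0 : 0 ≤ α) (hα1 : α < 1) (hv : 0 ≤ v)
    (h : u ≤ α * max v u) : u ≤ α * v := by
  rcases le_total u v with h' | h'
  · rwa [max_eq_left h'] at h
  · rw [max_eq_right h'] at h
    nlinarith [mul_nonneg hα0 hv]

/-- Ćirić-type common fixed point theorem for a pair of maps. -/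
theorem stmt9 {C : Type*} [MetricSpace C] [CompleteSpace C] [Nonempty C]
    (α : ℝ) (hα0 : 0 ≤ α) (hα1 : α < 1)
    (T₁ T₂ : C → C)
    (hT : ∀ x y : C,
      dist (T₁ x) (T₂ y) ≤
        α * max (max (dist x y) (dist x (T₁ x))) (dist y (T₂ y))) :
    ∃! z : C, T₁ z = z ∧ T₂ z = z := by
  obtain ⟨c₀⟩ := ‹Nonempty C›
  have L1 : ∀ a : C, dist (T₁ a) (T₂ (T₁ a)) ≤ α * dist a (T₁ a) := by
    intro a
    have h := hT a (T₁ a)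
    simp only [max_self] at h
    exact stmt9_aux hα0 hα1 dist_nonneg h
  have L2 : ∀ a : C, dist (T₂ a) (T₁ (T₂ a)) ≤ α * dist a (T₂ a) := by
    intro a
    have h := hT (T₂ a) a
    rw [dist_comm (T₂ a) a, dist_comm (T₁ (T₂ a)) (T₂ a)] at h
    rw [max_eq_left (le_max_left _ _)] at h
    exact stmt9_aux hα0 hα1 dist_nonneg h
  set x : ℕ → C := fun n => Nat.rec c₀ (fun n xn => if Even n then T₁ xn else T₂ xn) n
    with hx
  have hxsucc : ∀ n, x (n + 1) = if Even n then T₁ (x n) else T₂ (x n) := fun n => rfl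
  have hstep : ∀ n, dist (x (n + 1)) (x (n + 2)) ≤ α * dist (x n) (x (n + 1)) := by
    intro n
    rcases Nat.even_or_odd n with he | ho
    · rw [hxsucc (n + 1), hxsucc n, if_pos he, if_neg (by simp [Nat.even_add_one, he])]
      exact L1 (x n)
    · rw [hxsucc (n + 1), hxsucc n, if_neg (Nat.not_even_iff_odd.mpr ho),
        if_pos (by simp [Nat.even_add_one, Nat.not_even_iff_odd.mpr ho])]
      exact L2 (x n)
  have hgeom : ∀ n, dist (x n) (x (n + 1)) ≤ dist (x 0) (x 1) * α ^ n := by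
    intro n
    induction n with
    | zero => simp
    | succ n ih =>
      have := hstep n
      have h2 : α * dist (x n) (x (n + 1)) ≤ α * (dist (x 0) (x 1) * α ^ n) :=
        mul_le_mul_of_nonneg_left ih hα0
      calc dist (x (n + 1)) (x (n + 2)) ≤ α * (dist (x 0) (x 1) * α ^ n) := le_trans this h2
        _ = dist (x 0) (x 1) * α ^ (n + 1) := by ring
  have hcau : CauchySeq x := cauchySeq_of_le_geometric α (dist (x 0) (x 1)) hα1 hgeom
  obtain ⟨z, hz⟩ := cauchySeq_tendsto_of_complete hcau
  have htend1 : Tendsto (fun n : ℕ => (2 * n + 1 : ℕ)) atTop atTop :=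
    tendsto_atTop_atTop.mpr fun b => ⟨b, fun n hn => by omega⟩
  have htend2 : Tendsto (fun n : ℕ => (2 * n + 2 : ℕ)) atTop atTop :=
    tendsto_atTop_atTop.mpr fun b => ⟨b, fun n hn => by omega⟩
  have h1 : Tendsto (fun n => x (2 * n + 1)) atTop (𝓝 z) := hz.comp htend1
  have h2 : Tendsto (fun n => x (2 * n + 2)) atTop (𝓝 z) := hz.comp htend2
  have hT1z : T₁ z = z := by
    have hx2 : ∀ n, x (2 * n + 2) = T₂ (x (2 * n + 1)) := by
      intro n
      rw [show 2 * n + 2 = (2 * n + 1) + 1 by ring, hxsucc,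
        if_neg (by simp [Nat.even_add_one])]
    have key : ∀ n, dist (T₁ z) z ≤
        α * max (max (dist z (x (2 * n + 1))) (dist z (T₁ z)))
          (dist (x (2 * n + 1)) (x (2 * n + 2))) + dist (x (2 * n + 2)) z := by
      intro n
      have h3 := hT z (x (2 * n + 1))
      rw [← hx2 n] at h3
      calc dist (T₁ z) z ≤ dist (T₁ z) (x (2 * n + 2)) + dist (x (2 * n + 2)) z :=
            dist_triangle _ _ _
        _ ≤ _ := add_le_add_left h3 _
    have hd1 : Tendsto (fun n => dist z (x (2 * n + 1))) atTop (𝓝 0) := by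
      simpa using (tendsto_const_nhds : Tendsto (fun _ : ℕ => z) atTop (𝓝 z)).dist h1
    have hd2 : Tendsto (fun n => dist (x (2 * n + 1)) (x (2 * n + 2))) atTop (𝓝 0) := by
      simpa using h1.dist h2
    have hd3 : Tendsto (fun n => dist (x (2 * n + 2)) z) atTop (𝓝 0) := by
      simpa using h2.dist (tendsto_const_nhds : Tendsto (fun _ : ℕ => z) atTop (𝓝 z))
    have hf : Tendsto (fun n =>
        α * max (max (dist z (x (2 * n + 1))) (dist z (T₁ z)))
          (dist (x (2 * n + 1)) (x (2 * n + 2))) + dist (x (2 * n + 2)) z) atTop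
        (𝓝 (α * max (max 0 (dist z (T₁ z))) 0 + 0)) :=
      ((tendsto_const_nhds.mul ((hd1.max tendsto_const_nhds).max hd2)).add hd3)
    have hle := ge_of_tendsto' hf key
    rw [max_eq_right dist_nonneg, max_eq_left dist_nonneg, add_zero,
      dist_comm z (T₁ z)] at hle
    have h0 : dist (T₁ z) z = 0 := by nlinarith [dist_nonneg (x := T₁ z) (y := z)]
    exact dist_eq_zero.mp h0
  have hT2z : T₂ z = z := by
    have h := hT z z
    rw [hT1z] at h
    simp only [dist_self, max_self, max_eq_right dist_nonneg] at h
    have h0 : dist z (T₂ z) = 0 := by nlinarith [dist_nonneg (x := z) (y := T₂ z)]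
    exact (dist_eq_zero.mp h0).symm
  refine ⟨z, ⟨hT1z, hT2z⟩, ?_⟩
  rintro w ⟨hw1, hw2⟩
  have h := hT w z
  rw [hw1, hT2z] at h
  simp only [dist_self, max_eq_left dist_nonneg] at h
  have h0 : dist w z = 0 := by nlinarith [dist_nonneg (x := w) (y := z)]
  exact dist_eq_zero.mp h0
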